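/- Let G be a connected graph with Tr_t(G) = k, where k ≥ 2. Then there exists a total transitive partition {V_1, V_2, ..., V_k} of G of size k such that |V_k| = 2. -/
import Mathlib


/-- A total transitive partition of `G` into `k` parts: the parts are nonempty, they
partition the vertex set, and `V_i` dominates `V_j` for all `i ≤ j`. -/
def TTPartition {V : Type*} (G : SimpleGraph V) (k : ℕ) (P : Fin k → Set V) : Prop :=
  (∀ i, (P i).Nonempty) ∧
  (∀ v : V, ∃! i, v ∈ P i) ∧
  (∀ i j : Fin k, i ≤ j → ∀ v ∈ P j, ∃ u ∈ P i, G.Adj u v)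

/-- If `G` is a connected graph with total transitivity `k ≥ 2`, then there is a total
transitive partition `{V_1, …, V_k}` of `G` with `|V_k| = 2`. -/
theorem stmt7 {V : Type*} [Fintype V] (G : SimpleGraph V) (hconn : G.Connected)
    (k : ℕ) (hk : 2 ≤ k)
    (hTrt : IsGreatest {m : ℕ | ∃ P : Fin m → Set V, TTPartition G m P} k) :
    ∃ P : Fin k → Set V, TTPartition G k P ∧ (P ⟨k - 1, by omega⟩).ncard = 2 := by
  classical
  obtain ⟨P, hne, huniq, hdom⟩ := hTrt.1
  have hk0 : 0 < k := by omega
  have hk1 : k - 1 < k := by omega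
  let l : Fin k := ⟨k - 1, hk1⟩
  let z : Fin k := ⟨0, hk0⟩
  have hzl : z ≠ l := by
    intro h
    have : (0 : ℕ) = k - 1 := congrArg Fin.val h
    omega
  have hle : ∀ i : Fin k, i ≤ l :=
    fun i => Fin.le_def.2 (show i.val ≤ k - 1 by have := i.isLt; omega)
  have hzle : ∀ i : Fin k, z ≤ i :=
    fun i => Fin.le_def.2 (show 0 ≤ i.val from Nat.zero_le _)
  obtain ⟨v, hv⟩ := hne l
  obtain ⟨u, hu, huv⟩ := hdom l l le_rfl v hv
  have hune : u ≠ v := G.ne_of_adj huv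
  let P' : Fin k → Set V := fun j =>
    if j = l then {u, v} else if j = z then P z ∪ (P l \ {u, v}) else P j
  have hPl : P' l = {u, v} := if_pos rfl
  have hPz : P' z = P z ∪ (P l \ {u, v}) := by
    show (if z = l then _ else if z = z then _ else _) = _
    rw [if_neg hzl, if_pos rfl]
  have hPo : ∀ j : Fin k, j ≠ l → j ≠ z → P' j = P j := by
    intro j h1 h2
    show (if j = l then _ else if j = z then _ else _) = _
    rw [if_neg h1, if_neg h2]
  have memPl : ∀ w : V, w ∈ P' l ↔ (w = u ∨ w = v) := by
    intro w; rw [hPl]; simp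
  refine ⟨P', ⟨?_, ?_, ?_⟩, ?_⟩
  · intro i
    by_cases h1 : i = l
    · rw [h1, hPl]; exact ⟨u, by simp⟩
    by_cases h2 : i = z
    · rw [h2, hPz]; exact (hne z).mono Set.subset_union_left
    · rw [hPo i h1 h2]; exact hne i
  · intro w
    obtain ⟨i, hi, hiu⟩ := huniq w
    by_cases hil : i = l
    · by_cases hw : w = u ∨ w = v
      · refine ⟨l, (memPl w).2 hw, ?_⟩
        intro j hj
        by_cases h1 : j = l
        · exact h1
        by_cases h2 : j = z
        · rw [h2, hPz] at hj
          rcases hj with hj | hj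
          · exact absurd ((hiu z hj).trans hil) (h2 ▸ hzl)
          · exact absurd hw (by simpa using hj.2)
        · rw [hPo j h1 h2] at hj
          exact absurd ((hiu j hj).trans hil) h1
      · push_neg at hw
        refine ⟨z, ?_, ?_⟩
        · show w ∈ P' z
          rw [hPz]
          exact Or.inr ⟨hil ▸ hi, by simp [hw.1, hw.2]⟩
        · intro j hj
          by_cases h1 : j = l
          · rw [h1] at hj
            rcases (memPl w).1 hj with hj | hj
            · exact absurd hj hw.1
            · exact absurd hj hw.2
          by_cases h2 : j = z
          · exact h2
          · rw [hPo j h1 h2] at hj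
            exact absurd ((hiu j hj).trans hil) h1
    · have hwu : w ≠ u := fun h => hil (hiu i hi ▸ hiu l (h ▸ hu) ▸ rfl)
      have hwv : w ≠ v := fun h => hil (hiu i hi ▸ hiu l (h ▸ hv) ▸ rfl)
      by_cases hiz : i = z
      · refine ⟨z, ?_, ?_⟩
        · show w ∈ P' z
          rw [hPz]; exact Or.inl (hiz ▸ hi)
        · intro j hj
          by_cases h1 : j = l
          · rw [h1] at hj
            rcases (memPl w).1 hj with hj | hj
            · exact absurd hj hwu
            · exact absurd hj hwv
          by_cases h2 : j = z
          · exact h2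
          · rw [hPo j h1 h2] at hj
            exact absurd ((hiu j hj).trans hiz) h2
      · refine ⟨i, ?_, ?_⟩
        · show w ∈ P' i
          rw [hPo i hil hiz]; exact hi
        · intro j hj
          by_cases h1 : j = l
          · rw [h1] at hj
            rcases (memPl w).1 hj with hj | hj
            · exact absurd hj hwu
            · exact absurd hj hwv
          by_cases h2 : j = z
          · rw [h2, hPz] at hj
            rcases hj with hj | hj
            · exact absurd (h2 ▸ hiu z hj : j = i).symm (h2 ▸ hiz)
            · exact absurd (hiu l hj.1).symm hil
          · rw [hPo j h1 h2] at hj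
            exact hiu j hj
  · intro i j hij w hw
    by_cases hjl : j = l
    · rw [hjl] at hw
      by_cases hil : i = l
      · rcases (memPl w).1 hw with hw | hw
        · exact ⟨v, by rw [hil, hPl]; simp, hw ▸ huv.symm⟩
        · exact ⟨u, by rw [hil, hPl]; simp, hw ▸ huv⟩
      · have hwP : w ∈ P l := by
          rcases (memPl w).1 hw with hw | hw
          · exact hw ▸ hu
          · exact hw ▸ hv
        obtain ⟨x, hx, hxw⟩ := hdom i l (hle i) w hwP
        by_cases hiz : i = z
        · exact ⟨x, by rw [hiz, hPz]; exact Or.inl (hiz ▸ hx), hxw⟩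
        · exact ⟨x, by rw [hPo i hil hiz]; exact hx, hxw⟩
    by_cases hjz : j = z
    · have hiz : i = z := by
        have := hzle i
        rw [hjz] at hij
        exact le_antisymm hij this
      rw [hjz, hPz] at hw
      rcases hw with hw | hw
      · obtain ⟨x, hx, hxw⟩ := hdom z z le_rfl w hw
        exact ⟨x, by rw [hiz, hPz]; exact Or.inl hx, hxw⟩
      · obtain ⟨x, hx, hxw⟩ := hdom z l (hle z) w hw.1
        exact ⟨x, by rw [hiz, hPz]; exact Or.inl hx, hxw⟩
    · rw [hPo j hjl hjz] at hw
      have hil : i ≠ l := by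
        intro h
        exact hjl (le_antisymm (hle j) (h ▸ hij))
      obtain ⟨x, hx, hxw⟩ := hdom i j hij w hw
      by_cases hiz : i = z
      · exact ⟨x, by rw [hiz, hPz]; exact Or.inl (hiz ▸ hx), hxw⟩
      · exact ⟨x, by rw [hPo i hil hiz]; exact hx, hxw⟩
  · show (P' l).ncard = 2
    rw [hPl]
    exact Set.ncard_pair hune
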